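/- For every n ≥ 0, the number of lattice paths of length n that never go below the x-axis (Dyck path prefixes) equals the binomial coefficient binomial(n, ⌊n/2⌋). -/

import Mathlib

/-- A lattice path of length `n`: each step is `+1` (U) or `-1` (D). -/
def IsPath {n : ℕ} (P : Fin n → ℤ) : Prop := ∀ l, P l = 1 ∨ P l = -1

/-- Height of the path `P` at `x = a`: sum of the first `a` steps. -/
def ht {n : ℕ} (P : Fin n → ℤ) (a : ℕ) : ℤ :=
  ∑ l ∈ Finset.univ.filter (fun l : Fin n => (l : ℕ) < a), P l

namespace Stmt17

def step (x : Bool) : ℤ := if x then 1 else -1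

def hts {n : ℕ} (b : Fin n → Bool) (a : ℕ) : ℤ :=
  ∑ l : Fin n, if (l : ℕ) < a then step (b l) else 0

def Q (n : ℕ) (h : ℤ) (b : Fin n → Bool) : Prop :=
  (∀ a ≤ n, 0 ≤ hts b a) ∧ hts b n = h

instance (n : ℕ) (h : ℤ) : DecidablePred (Q n h) := fun b => by
  unfold Q; infer_instance

def T (n : ℕ) (h : ℤ) : Finset (Fin n → Bool) := Finset.univ.filter (Q n h)

def c (n : ℕ) (h : ℤ) : ℕ := (T n h).card

lemma mem_T {n : ℕ} {h : ℤ} {b : Fin n → Bool} : b ∈ T n h ↔ Q n h b := by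
  simp [T]

lemma hts_zero {n : ℕ} (b : Fin n → Bool) : hts b 0 = 0 := by
  simp [hts]

lemma hts_top {n : ℕ} (b : Fin n → Bool) : hts b n = ∑ l : Fin n, step (b l) := by
  unfold hts
  exact Finset.sum_congr rfl fun l _ => if_pos l.isLt

lemma step_le_one (x : Bool) : step x ≤ 1 := by cases x <;> simp [step]

lemma hts_top_le {n : ℕ} (b : Fin n → Bool) : hts b n ≤ n := by
  rw [hts_top]
  calc ∑ l : Fin n, step (b l) ≤ ∑ _l : Fin n, (1 : ℤ) :=
        Finset.sum_le_sum fun l _ => step_le_one (b l)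
    _ = n := by simp

lemma hts_snoc_le {n : ℕ} (b : Fin n → Bool) (x : Bool) {a : ℕ} (ha : a ≤ n) :
    hts (Fin.snoc b x) a = hts b a := by
  unfold hts
  rw [Fin.sum_univ_castSucc]
  simp only [Fin.snoc_castSucc, Fin.coe_castSucc, Fin.val_last]
  rw [if_neg (by omega), add_zero]

lemma hts_snoc_succ {n : ℕ} (b : Fin n → Bool) (x : Bool) :
    hts (Fin.snoc b x) (n + 1) = hts b n + step x := by
  unfold hts
  rw [Fin.sum_univ_castSucc]
  simp only [Fin.snoc_castSucc, Fin.snoc_last, Fin.coe_castSucc, Fin.val_last]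
  rw [if_pos (by omega)]
  congr 1
  refine Finset.sum_congr rfl fun l _ => ?_
  rw [if_pos (by omega), if_pos l.isLt]

lemma T_neg {n : ℕ} {h : ℤ} (hh : h < 0) : T n h = ∅ := by
  ext b
  simp only [mem_T, Finset.notMem_empty, iff_false]
  rintro ⟨h1, h2⟩
  have := h1 n le_rfl
  omega

lemma c_zero (h : ℤ) : c 0 h = if h = 0 then 1 else 0 := by
  unfold c T
  have hQ : ∀ b : Fin 0 → Bool, Q 0 h b ↔ h = 0 := by
    intro b
    unfold Q
    have h0 : hts b 0 = 0 := hts_zero b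
    constructor
    · rintro ⟨_, h2⟩; omega
    · rintro rfl
      exact ⟨fun a ha => by interval_cases a; omega, h0⟩
  split
  · next heq =>
    rw [Finset.filter_true_of_mem (fun b _ => (hQ b).2 heq)]
    simp
  · next hne =>
    rw [Finset.filter_false_of_mem (fun b _ => fun hq => hne ((hQ b).1 hq))]
    simp

lemma c_rec (n : ℕ) (h : ℤ) (hh : 0 ≤ h) :
    c (n + 1) h = c n (h - 1) + c n (h + 1) := by
  unfold c
  rw [← Finset.card_filter_add_card_filter_not
    (s := T (n + 1) h) (p := fun b => b (Fin.last n) = true)]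
  congr 1
  · -- last step is U : init ends at h - 1
    apply Finset.card_bij (fun b _ => Fin.init b)
    · intro b hb
      simp only [Finset.mem_filter] at hb
      obtain ⟨hbT, hlast⟩ := hb
      rw [mem_T] at hbT ⊢
      obtain ⟨h1, h2⟩ := hbT
      have hb' : b = Fin.snoc (Fin.init b) true := by
        rw [← hlast]; exact (Fin.snoc_init_self b).symm
      constructor
      · intro a ha
        have := h1 a (by omega)
        rwa [hb', hts_snoc_le _ _ ha] at this
      · have := h2
        rw [hb', hts_snoc_succ] at this
        simp [step] at this
        omega
    · intro b1 hb1 b2 hb2 heq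
      simp only [Finset.mem_filter] at hb1 hb2
      rw [← Fin.snoc_init_self b1, ← Fin.snoc_init_self b2, hb1.2, hb2.2, heq]
    · intro x hx
      rw [mem_T] at hx
      obtain ⟨h1, h2⟩ := hx
      refine ⟨Fin.snoc x true, ?_, by simp⟩
      simp only [Finset.mem_filter, Fin.snoc_last, and_true]
      rw [mem_T]
      constructor
      · intro a ha
        rcases Nat.lt_or_ge a (n + 1) with hlt | hge
        · rw [hts_snoc_le _ _ (by omega)]
          exact h1 a (by omega)
        · have hxx : a = n + 1 := by omega
          subst hxx
          rw [hts_snoc_succ, h2]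
          simp [step]
          omega
      · rw [hts_snoc_succ, h2]
        simp [step]
  · -- last step is D : init ends at h + 1
    apply Finset.card_bij (fun b _ => Fin.init b)
    · intro b hb
      simp only [Finset.mem_filter] at hb
      obtain ⟨hbT, hlast⟩ := hb
      rw [mem_T] at hbT ⊢
      obtain ⟨h1, h2⟩ := hbT
      have hlast' : b (Fin.last n) = false := by
        cases hb' : b (Fin.last n) <;> simp_all
      have hb' : b = Fin.snoc (Fin.init b) false := by
        rw [← hlast']; exact (Fin.snoc_init_self b).symm
      constructor
      · intro a ha
        have := h1 a (by omega)
        rwa [hb', hts_snoc_le _ _ ha] at this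
      · have := h2
        rw [hb', hts_snoc_succ] at this
        simp [step] at this
        omega
    · intro b1 hb1 b2 hb2 heq
      simp only [Finset.mem_filter] at hb1 hb2
      have e1 : b1 (Fin.last n) = false := by
        cases hb' : b1 (Fin.last n) <;> simp_all
      have e2 : b2 (Fin.last n) = false := by
        cases hb' : b2 (Fin.last n) <;> simp_all
      rw [← Fin.snoc_init_self b1, ← Fin.snoc_init_self b2, e1, e2, heq]
    · intro x hx
      rw [mem_T] at hx
      obtain ⟨h1, h2⟩ := hx
      refine ⟨Fin.snoc x false, ?_, by simp⟩
      simp only [Finset.mem_filter, Fin.snoc_last]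
      refine ⟨?_, by simp⟩
      rw [mem_T]
      constructor
      · intro a ha
        rcases Nat.lt_or_ge a (n + 1) with hlt | hge
        · rw [hts_snoc_le _ _ (by omega)]
          exact h1 a (by omega)
        · have hxx : a = n + 1 := by omega
          subst hxx
          rw [hts_snoc_succ, h2]
          simp [step]
          omega
      · rw [hts_snoc_succ, h2]
        simp [step]

lemma pascal (n k : ℕ) :
    Nat.choose (n + 1) (k + 1) = Nat.choose n k + Nat.choose n (k + 1) :=
  Nat.choose_succ_succ n k

lemma main (n : ℕ) : ∀ h : ℕ,
    (n % 2 = h % 2 →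
      c n (h : ℤ) + Nat.choose n ((n + h) / 2 + 1) = Nat.choose n ((n + h) / 2)) ∧
    (n % 2 ≠ h % 2 → c n (h : ℤ) = 0) := by
  induction n with
  | zero =>
    intro h
    constructor
    · intro hpar
      rcases Nat.eq_zero_or_pos h with h0 | h0
      · subst h0
        simp [c_zero]
      · have hc : c 0 (h : ℤ) = 0 := by
          rw [c_zero, if_neg (by exact_mod_cast h0.ne')]
        have hd : 1 ≤ h / 2 := by omega
        rw [hc]
        rw [Nat.choose_eq_zero_of_lt (by omega), Nat.choose_eq_zero_of_lt (by omega)]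
    · intro hpar
      have h0 : h ≠ 0 := by omega
      rw [c_zero]
      rw [if_neg (by exact_mod_cast h0)]
  | succ n ih =>
    intro h
    match h with
    | 0 =>
      have hrec : c (n + 1) 0 = c n (-1) + c n 1 := by
        have := c_rec n 0 le_rfl
        simpa using this
      have hneg : c n (-1) = 0 := by
        unfold c; rw [T_neg (by norm_num)]; simp
      rw [hneg, zero_add] at hrec
      constructor
      · intro hpar
        have hodd : n % 2 = 1 := by omega
        have IH := (ih 1).1 (by omega)
        obtain ⟨k, hk2⟩ : ∃ k, n + 1 = 2 * k := ⟨(n + 1) / 2, by omega⟩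
        have hk1 : 1 ≤ k := by omega
        have idx1 : (n + 1 + 0) / 2 = k := by omega
        have idx2 : (n + 1) / 2 = k := by omega
        rw [idx2] at IH
        rw [Nat.cast_zero, hrec, idx1]
        have p1 : Nat.choose (n + 1) (k + 1) = Nat.choose n k + Nat.choose n (k + 1) :=
          pascal n k
        have p2 : Nat.choose (n + 1) k = Nat.choose n (k - 1) + Nat.choose n k := by
          have hp := pascal n (k - 1)
          rwa [show k - 1 + 1 = k by omega] at hp
        have p3 : Nat.choose n (k - 1) = Nat.choose n k := by
          have hs := Nat.choose_symm (show k - 1 ≤ n by omega)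
          rw [show n - (k - 1) = k by omega] at hs
          exact hs.symm
        push_cast at IH ⊢
        omega
      · intro hpar
        have IH := (ih 1).2 (by omega)
        rw [Nat.cast_zero, hrec]
        exact_mod_cast IH
    | h + 1 =>
      have hrec : c (n + 1) (((h : ℕ) : ℤ) + 1) = c n (h : ℤ) + c n ((h : ℤ) + 2) := by
        have := c_rec n ((h : ℤ) + 1) (by positivity)
        simpa [add_assoc] using this
      constructor
      · intro hpar
        have hp : n % 2 = h % 2 := by omega
        have IH1 := (ih h).1 hp
        have IH2 := (ih (h + 2)).1 (by omega)
        obtain ⟨k, hk⟩ : ∃ k, k = (n + h) / 2 := ⟨(n + h) / 2, rfl⟩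
        have hpar2 : n % 2 = h % 2 := hp
        have hke : n + h = 2 * k := by omega
        have idx0 : (n + 1 + (h + 1)) / 2 = k + 1 := by omega
        have idx1 : (n + h) / 2 = k := by omega
        have idx2 : (n + (h + 2)) / 2 = k + 1 := by omega
        rw [idx1] at IH1
        rw [idx2] at IH2
        push_cast at IH2
        rw [show (((h : ℕ) + 1 : ℕ) : ℤ) = ((h : ℕ) : ℤ) + 1 by push_cast; ring, hrec, idx0]
        have p1 : Nat.choose (n + 1) (k + 1 + 1)
            = Nat.choose n (k + 1) + Nat.choose n (k + 1 + 1) := pascal n (k + 1)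
        have p2 : Nat.choose (n + 1) (k + 1) = Nat.choose n k + Nat.choose n (k + 1) :=
          pascal n k
        omega
      · intro hpar
        have IH1 := (ih h).2 (by omega)
        have IH2 := (ih (h + 2)).2 (by omega)
        push_cast at IH2
        rw [show (((h : ℕ) + 1 : ℕ) : ℤ) = ((h : ℕ) : ℤ) + 1 by push_cast; ring, hrec, IH1, IH2]

lemma tele (f g : ℕ → ℕ) (h0 : f 0 = 0) :
    ∀ m, (∀ j < m, g j + f j = f (j + 1)) → ∑ j ∈ Finset.range m, g j = f m := by
  intro m
  induction m with
  | zero => intro _; simpa using h0.symm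
  | succ m ih =>
    intro hstep
    rw [Finset.sum_range_succ, ih (fun j hj => hstep j (by omega))]
    have := hstep m (by omega)
    omega

lemma card_sum (n : ℕ) :
    (Finset.univ.filter (fun b : Fin n → Bool => ∀ a ≤ n, 0 ≤ hts b a)).card
      = ∑ h ∈ Finset.range (n + 1), c n (h : ℤ) := by
  rw [Finset.card_eq_sum_card_fiberwise
    (f := fun b => (hts b n).toNat) (t := Finset.range (n + 1)) ?_]
  · refine Finset.sum_congr rfl fun h hh => ?_
    unfold c
    congr 1
    ext b
    simp only [Finset.mem_filter, Finset.mem_univ, true_and, mem_T, Q]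
    constructor
    · rintro ⟨h1, h2⟩
      have := h1 n le_rfl
      exact ⟨h1, by omega⟩
    · rintro ⟨h1, h2⟩
      exact ⟨h1, by omega⟩
  · intro b hb
    simp only [Finset.mem_coe, Finset.mem_filter, Finset.mem_univ, true_and] at hb
    have h1 := hb n le_rfl
    have h2 := hts_top_le b
    simp only [Finset.mem_coe, Finset.mem_range]
    omega

lemma count_bool (n : ℕ) :
    (Finset.univ.filter (fun b : Fin n → Bool => ∀ a ≤ n, 0 ≤ hts b a)).card
      = Nat.choose n (n / 2) := by
  rw [card_sum]
  have key : ∀ h : ℕ, c n (h : ℤ) ≠ 0 → n % 2 = h % 2 := by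
    intro h hc
    by_contra hpar
    exact hc ((main n h).2 hpar)
  have reindex : ∑ h ∈ Finset.range (n + 1), c n (h : ℤ)
      = ∑ j ∈ Finset.range (n / 2 + 1), c n ((n - 2 * j : ℕ) : ℤ) := by
    refine Finset.sum_bij_ne_zero (fun h _ _ => (n - h) / 2) ?_ ?_ ?_ ?_
    · intro a h1 h2
      simp only [Finset.mem_range] at h1 ⊢
      omega
    · intro a1 h11 h12 a2 h21 h22 heq
      simp only [Finset.mem_range] at h11 h21
      have k1 := key a1 h12
      have k2 := key a2 h22
      omega
    · intro b hb hgb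
      simp only [Finset.mem_range] at hb
      have hb' : n - 2 * b + 2 * b = n := by omega
      refine ⟨n - 2 * b, by simp only [Finset.mem_range]; omega, hgb, ?_⟩
      show (n - (n - 2 * b)) / 2 = b
      omega
    · intro a h1 h2
      simp only [Finset.mem_range] at h1
      have k1 := key a h2
      show c n (a : ℤ) = c n ((n - 2 * ((n - a) / 2) : ℕ) : ℤ)
      rw [show n - 2 * ((n - a) / 2) = a by omega]
  rw [reindex]
  have := tele (fun j => Nat.choose n (n + 1 - j))
    (fun j => c n ((n - 2 * j : ℕ) : ℤ))
    (by simp [Nat.choose_succ_self]) (n / 2 + 1) ?_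
  · rw [this]
    show Nat.choose n (n + 1 - (n / 2 + 1)) = Nat.choose n (n / 2)
    rw [show n + 1 - (n / 2 + 1) = n - n / 2 by omega]
    exact Nat.choose_symm (show n / 2 ≤ n by omega)
  · intro j hj
    have h2j : 2 * j ≤ n := by omega
    have hm := (main n (n - 2 * j)).1 (by omega)
    rw [show (n + (n - 2 * j)) / 2 = n - j by omega] at hm
    show c n ((n - 2 * j : ℕ) : ℤ) + Nat.choose n (n + 1 - j)
        = Nat.choose n (n + 1 - (j + 1))
    rw [show n + 1 - j = (n - j) + 1 by omega, show n + 1 - (j + 1) = n - j by omega]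
    exact hm

lemma ht_step {n : ℕ} (b : Fin n → Bool) (a : ℕ) :
    ht (fun l => step (b l)) a = hts b a := by
  unfold ht hts
  rw [Finset.sum_filter]

theorem main_count (n : ℕ) :
    Nat.card {P : Fin n → ℤ // IsPath P ∧ ∀ a ≤ n, 0 ≤ ht P a} =
    Nat.choose n (n / 2) := by
  have hbij : Function.Bijective
      (fun b : {b : Fin n → Bool // ∀ a ≤ n, 0 ≤ hts b a} =>
        (⟨fun l => step (b.1 l), fun l => by cases hb : b.1 l <;> simp [step, hb],
          fun a ha => by rw [ht_step]; exact b.2 a ha⟩ :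
          {P : Fin n → ℤ // IsPath P ∧ ∀ a ≤ n, 0 ≤ ht P a})) := by
    constructor
    · rintro ⟨b1, hb1⟩ ⟨b2, hb2⟩ heq
      simp only [Subtype.mk.injEq] at heq
      ext l
      have := congrFun heq l
      cases h1 : b1 l <;> cases h2 : b2 l <;> simp_all [step]
    · rintro ⟨P, hP, hnn⟩
      refine ⟨⟨fun l => decide (P l = 1), ?_⟩, ?_⟩
      · intro a ha
        have hsb : (fun l => step (decide (P l = 1))) = P := by
          funext l
          rcases hP l with h | h <;> simp [step, h]
        rw [← ht_step]
        rw [hsb]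
        exact hnn a ha
      · simp only [Subtype.mk.injEq]
        funext l
        rcases hP l with h | h <;> simp [step, h]
  rw [← Nat.card_eq_of_bijective _ hbij]
  rw [Nat.card_eq_fintype_card, Fintype.card_subtype]
  exact count_bool n

end Stmt17

theorem stmt17 (n : ℕ) :
    Nat.card {P : Fin n → ℤ // IsPath P ∧ ∀ a ≤ n, 0 ≤ ht P a} =
    Nat.choose n (n / 2) :=
  Stmt17.main_count n
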